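/- For each integer N ≥ 1 let 𝔐_N be a nonempty complex affine algebraic variety (the zero set of finitely many polynomials in some ℂ^{d_N}), and for N₁ > N₂ let I_{N₁,N₂} : 𝔐_{N₁} → 𝔐_{N₂} be morphisms (restrictions of polynomial maps) satisfying I_{N₂,N₃} ∘ I_{N₁,N₂} = I_{N₁,N₃} whenever N₁ > N₂ > N₃. Then ⋂_{N>1} Im(I_{N,1}) ≠ ∅. -/

import Mathlib

noncomputable section

open MvPolynomial

theorem aux_surj {σ : Type} [Countable σ] {K : Type} [Field K]
    (f : MvPolynomial σ ℂ →+* K) (hf : Function.Surjective f) :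
    ∀ z : K, ∃ a : ℂ, f (MvPolynomial.C a) = z := by
  letI : Algebra ℂ K := (f.comp MvPolynomial.C).toAlgebra
  have halgmap : algebraMap ℂ K = f.comp MvPolynomial.C := rfl
  let g : MvPolynomial σ ℂ →ₐ[ℂ] K := { f with commutes' := fun c => rfl }
  have hgs : Function.Surjective g := hf
  have hrank : Module.rank ℂ K ≤ Cardinal.aleph0 := by
    refine le_trans (LinearMap.rank_le_of_surjective g.toLinearMap hgs) ?_
    rw [← (MvPolynomial.basisMonomials σ ℂ).mk_eq_rank'']
    exact Cardinal.mk_le_aleph0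
  have halg : Algebra.IsAlgebraic ℂ K := by
    constructor
    intro x
    by_contra hx
    have h := (Transcendental.linearIndependent_sub_inv (F := ℂ) (E := K) hx).cardinal_le_rank
    have : Cardinal.mk ℂ ≤ Cardinal.aleph0 := h.trans hrank
    rw [Cardinal.mk_complex] at this
    exact absurd this (not_le.mpr Cardinal.aleph0_lt_continuum)
  have hs := (IsAlgClosed.algebraMap_bijective_of_isIntegral (k := ℂ) (K := K)).2
  intro z
  obtain ⟨a, ha⟩ := hs z
  rw [halgmap] at ha
  exact ⟨a, ha⟩

/-- **Statement 7** (Lemma 10.14 of Fukaya–Oh–Ohta–Ono, *Lagrangian Floer theory on compact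
toric manifolds I*).  For each `N ≥ 1` let `𝔐_N` be a nonempty complex affine algebraic
variety (the common zero set of finitely many polynomials in some `ℂ^{d_N}`), and for
`N₁ > N₂ ≥ 1` let `I_{N₁,N₂} : 𝔐_{N₁} → 𝔐_{N₂}` be morphisms (restrictions of polynomial
maps) with `I_{N₂,N₃} ∘ I_{N₁,N₂} = I_{N₁,N₃}` on `𝔐_{N₁}` whenever `N₁ > N₂ > N₃ ≥ 1`.
Then `⋂_{N>1} Im (I_{N,1}) ≠ ∅`. -/
theorem inverse_system_of_affine_varieties_images_inter_nonempty
    (d : ℕ → ℕ) (V : (N : ℕ) → Set (Fin (d N) → ℂ))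
    (hvar : ∀ N, 1 ≤ N → ∃ (k : ℕ) (p : Fin k → MvPolynomial (Fin (d N)) ℂ),
      V N = {x | ∀ a, MvPolynomial.eval x (p a) = 0})
    (hne : ∀ N, 1 ≤ N → (V N).Nonempty)
    (I : (N₁ N₂ : ℕ) → (Fin (d N₁) → ℂ) → (Fin (d N₂) → ℂ))
    (hpoly : ∀ N₁ N₂, 1 ≤ N₂ → N₂ < N₁ →
      ∃ P : Fin (d N₂) → MvPolynomial (Fin (d N₁)) ℂ,
        ∀ x j, I N₁ N₂ x j = MvPolynomial.eval x (P j))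
    (hmaps : ∀ N₁ N₂, 1 ≤ N₂ → N₂ < N₁ → ∀ x ∈ V N₁, I N₁ N₂ x ∈ V N₂)
    (hcomp : ∀ N₁ N₂ N₃, 1 ≤ N₃ → N₃ < N₂ → N₂ < N₁ → ∀ x ∈ V N₁,
      I N₂ N₃ (I N₁ N₂ x) = I N₁ N₃ x) :
    ∃ y ∈ V 1, ∀ N, 1 < N → ∃ x ∈ V N, I N 1 x = y := by
  classical
  -- totalize the choices of defining polynomials
  have hvar' : ∀ N, ∃ (k : ℕ) (p : Fin k → MvPolynomial (Fin (d N)) ℂ),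
      1 ≤ N → V N = {x | ∀ a, MvPolynomial.eval x (p a) = 0} := by
    intro N
    by_cases h : 1 ≤ N
    · obtain ⟨k, p, hp⟩ := hvar N h
      exact ⟨k, p, fun _ => hp⟩
    · exact ⟨0, Fin.elim0, fun h' => absurd h' h⟩
  choose k p hp using hvar'
  have hpoly' : ∀ N₁ N₂, ∃ P : Fin (d N₂) → MvPolynomial (Fin (d N₁)) ℂ,
      1 ≤ N₂ → N₂ < N₁ → ∀ x j, I N₁ N₂ x j = MvPolynomial.eval x (P j) := by
    intro N₁ N₂
    by_cases h : 1 ≤ N₂ ∧ N₂ < N₁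
    · obtain ⟨P, hPP⟩ := hpoly N₁ N₂ h.1 h.2
      exact ⟨P, fun _ _ => hPP⟩
    · exact ⟨fun _ => 0, fun h1 h2 => absurd ⟨h1, h2⟩ h⟩
  choose P hP using hpoly'
  -- the big polynomial ring
  let σ : Type := Σ N : ℕ, Fin (d N)
  let emb : ∀ N : ℕ, Fin (d N) → σ := fun N i => ⟨N, i⟩
  let B := MvPolynomial σ ℂ
  let ι : Type := (Σ N : ℕ, Fin (k N)) ⊕ (Σ q : ℕ × ℕ, Fin (d q.2))
  let G : ι → B := fun i =>
    match i with
    | Sum.inl ⟨N, a⟩ => if 1 ≤ N then rename (emb N) (p N a) else 0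
    | Sum.inr ⟨(N₁, N₂), j⟩ =>
        if 1 ≤ N₂ ∧ N₂ < N₁ then X (emb N₂ j) - rename (emb N₁) (P N₁ N₂ j) else 0
  let level : ι → ℕ := fun i =>
    match i with
    | Sum.inl ⟨N, _⟩ => N
    | Sum.inr ⟨(N₁, _), _⟩ => N₁
  let J : Ideal B := Ideal.span (Set.range G)
  -- the ideal is proper
  have hJ : J ≠ ⊤ := by
    intro htop
    have h1 : (1 : B) ∈ Submodule.span B (Set.range G) := by
      rw [show Submodule.span B (Set.range G) = J from rfl, htop]; trivial
    rw [Finsupp.mem_span_range_iff_exists_finsupp] at h1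
    obtain ⟨c, hc⟩ := h1
    set M := c.support.sup level + 1 with hM
    obtain ⟨v, hv⟩ := hne M (Nat.le_add_left 1 _)
    let w : ∀ N : ℕ, Fin (d N) → ℂ := fun N =>
      if 1 ≤ N ∧ N < M then I M N v else 0
    let x : σ → ℂ := fun s => w s.1 s.2
    have hwval : ∀ N, 1 ≤ N → N < M → w N = I M N v := by
      intro N h1' h2'
      simp only [w, if_pos (And.intro h1' h2')]
    have hwV : ∀ N, 1 ≤ N → N < M → w N ∈ V N := by
      intro N h1' h2'
      rw [hwval N h1' h2']
      exact hmaps M N h1' h2' v hv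
    have hwI : ∀ N₁ N₂, 1 ≤ N₂ → N₂ < N₁ → N₁ < M → I N₁ N₂ (w N₁) = w N₂ := by
      intro N₁ N₂ h1' h2' h3'
      rw [hwval N₁ (le_trans h1' h2'.le) h3', hwval N₂ h1' (h2'.trans h3')]
      exact hcomp M N₁ N₂ h1' h2' h3' v hv
    have hzero : ∀ i ∈ c.support, MvPolynomial.eval x (G i) = 0 := by
      intro i hi
      have hlev : level i < M := Nat.lt_succ_of_le (Finset.le_sup hi)
      rcases i with ⟨N, a⟩ | ⟨⟨N₁, N₂⟩, j⟩
      · by_cases h : 1 ≤ N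
        · have hNM : N < M := hlev
          have hx : (fun i => x (emb N i)) = w N := rfl
          have hmem := hwV N h hNM
          rw [hp N h] at hmem
          simp only [G, if_pos h, eval_rename]
          exact hmem a
        · simp [G, if_neg h]
      · by_cases h : 1 ≤ N₂ ∧ N₂ < N₁
        · have hNM : N₁ < M := hlev
          have hI := hwI N₁ N₂ h.1 h.2 hNM
          simp only [G, if_pos h, map_sub, eval_X, eval_rename]
          have h1' : x (emb N₂ j) = w N₂ j := rfl
          have h2' : MvPolynomial.eval (x ∘ emb N₁) (P N₁ N₂ j) = I N₁ N₂ (w N₁) j := by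
            exact (hP N₁ N₂ h.1 h.2 (x ∘ emb N₁) j).symm
          rw [h1', h2', hI]
          ring
        · simp [G, if_neg h]
    have := congrArg (MvPolynomial.eval x) hc
    rw [map_one, Finsupp.sum, map_sum] at this
    rw [Finset.sum_congr rfl (fun i hi => by
      rw [smul_eq_mul, map_mul, hzero i hi, mul_zero])] at this
    simp at this
  -- maximal ideal, residue field = ℂ
  obtain ⟨m, hmmax, hJm⟩ := Ideal.exists_le_maximal J hJ
  letI : Field (B ⧸ m) := Ideal.Quotient.field m
  have hsurj := aux_surj (Ideal.Quotient.mk m) Ideal.Quotient.mk_surjective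
  let x : σ → ℂ := fun s => (hsurj (Ideal.Quotient.mk m (X s))).choose
  have hx : ∀ s : σ, Ideal.Quotient.mk m (MvPolynomial.C (x s)) = Ideal.Quotient.mk m (X s) :=
    fun s => (hsurj (Ideal.Quotient.mk m (X s))).choose_spec
  have key : ∀ q : B, Ideal.Quotient.mk m q
      = Ideal.Quotient.mk m (MvPolynomial.C (MvPolynomial.eval x q)) := by
    have heq : Ideal.Quotient.mk m
        = ((Ideal.Quotient.mk m).comp MvPolynomial.C).comp (MvPolynomial.eval x) := by
      apply MvPolynomial.ringHom_ext
      · intro a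
        simp only [RingHom.comp_apply, eval_C]
      · intro s
        simp only [RingHom.comp_apply, eval_X]
        exact (hx s).symm
    intro q
    conv_lhs => rw [heq]
    rfl
  have hinj : Function.Injective ((Ideal.Quotient.mk m).comp (MvPolynomial.C (σ := σ) (R := ℂ))) :=
    RingHom.injective _
  have hgen : ∀ i : ι, MvPolynomial.eval x (G i) = 0 := by
    intro i
    have hmem : G i ∈ m := hJm (Ideal.subset_span ⟨i, rfl⟩)
    have h0 := key (G i)
    rw [Ideal.Quotient.eq_zero_iff_mem.mpr hmem] at h0
    have : ((Ideal.Quotient.mk m).comp (MvPolynomial.C (σ := σ) (R := ℂ)))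
        (MvPolynomial.eval x (G i)) = ((Ideal.Quotient.mk m).comp MvPolynomial.C) 0 := by
      simp only [RingHom.comp_apply, map_zero]
      exact h0.symm
    exact hinj this
  -- the point satisfies the equations at every level
  have hxV : ∀ N, 1 ≤ N → (x ∘ emb N) ∈ V N := by
    intro N hN
    rw [hp N hN]
    intro a
    have := hgen (Sum.inl ⟨N, a⟩)
    simp only [G, if_pos hN, eval_rename] at this
    exact this
  have hxI : ∀ N₁ N₂, 1 ≤ N₂ → N₂ < N₁ → I N₁ N₂ (x ∘ emb N₁) = x ∘ emb N₂ := by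
    intro N₁ N₂ h1 h2
    funext j
    have := hgen (Sum.inr ⟨(N₁, N₂), j⟩)
    simp only [G, if_pos (And.intro h1 h2), map_sub, eval_X, eval_rename, sub_eq_zero] at this
    rw [hP N₁ N₂ h1 h2 (x ∘ emb N₁) j]
    exact this.symm
  refine ⟨x ∘ emb 1, hxV 1 le_rfl, fun N hN => ⟨x ∘ emb N, hxV N (le_of_lt hN), ?_⟩⟩
  exact hxI N 1 le_rfl hN
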